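/- Let κ be an infinite cardinal, X a set, and 𝒜 a collection of subsets of X such that every point of X belongs to at most κ members of 𝒜. Then the number of finite minimal covers of X by elements of 𝒜 is at most κ. -/

import Mathlib

open Set Cardinal

private lemma miscenko_key {X : Type*} (κ : Cardinal) (hκ : ℵ₀ ≤ κ)
    (𝒜 : Set (Set X)) (hord : ∀ x : X, #{A : Set X // A ∈ 𝒜 ∧ x ∈ A} ≤ κ) :
    ∀ n : ℕ, ∀ Y : Set X,
      #{𝒲 : Set (Set X) // 𝒲 ⊆ 𝒜 ∧ Y ⊆ ⋃₀ 𝒲 ∧ (∀ 𝒲' ⊂ 𝒲, ¬ Y ⊆ ⋃₀ 𝒲') ∧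
        𝒲.Finite ∧ 𝒲.ncard = n} ≤ κ := by
  intro n
  induction n with
  | zero =>
    intro Y
    have hsub : Subsingleton {𝒲 : Set (Set X) // 𝒲 ⊆ 𝒜 ∧ Y ⊆ ⋃₀ 𝒲 ∧
        (∀ 𝒲' ⊂ 𝒲, ¬ Y ⊆ ⋃₀ 𝒲') ∧ 𝒲.Finite ∧ 𝒲.ncard = 0} := by
      constructor
      rintro ⟨𝒲₁, -, -, -, hf₁, hc₁⟩ ⟨𝒲₂, -, -, -, hf₂, hc₂⟩
      have e₁ : 𝒲₁ = ∅ := (Set.ncard_eq_zero hf₁).mp hc₁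
      have e₂ : 𝒲₂ = ∅ := (Set.ncard_eq_zero hf₂).mp hc₂
      exact Subtype.ext (e₁.trans e₂.symm)
    calc #{𝒲 : Set (Set X) // 𝒲 ⊆ 𝒜 ∧ Y ⊆ ⋃₀ 𝒲 ∧
        (∀ 𝒲' ⊂ 𝒲, ¬ Y ⊆ ⋃₀ 𝒲') ∧ 𝒲.Finite ∧ 𝒲.ncard = 0} ≤ 1 :=
          Cardinal.le_one_iff_subsingleton.mpr hsub
      _ ≤ κ := le_trans one_le_aleph0 hκ
  | succ n ih =>
    intro Y
    rcases Y.eq_empty_or_nonempty with rfl | ⟨y, hy⟩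
    · have hempty : IsEmpty {𝒲 : Set (Set X) // 𝒲 ⊆ 𝒜 ∧ (∅ : Set X) ⊆ ⋃₀ 𝒲 ∧
          (∀ 𝒲' ⊂ 𝒲, ¬ (∅ : Set X) ⊆ ⋃₀ 𝒲') ∧ 𝒲.Finite ∧ 𝒲.ncard = n + 1} := by
        constructor
        rintro ⟨𝒲, -, -, hmin, hfin, hcard⟩
        have hne : 𝒲.Nonempty := by
          rw [Set.nonempty_iff_ne_empty]
          intro h
          rw [h] at hcard
          simp at hcard
        exact hmin ∅ (Set.empty_ssubset.mpr hne) (empty_subset _)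
      exact le_of_eq_of_le (@Cardinal.mk_eq_zero _ hempty) zero_le
    · -- y ∈ Y; build an injection into a sigma type
      set T := {𝒲 : Set (Set X) // 𝒲 ⊆ 𝒜 ∧ Y ⊆ ⋃₀ 𝒲 ∧ (∀ 𝒲' ⊂ 𝒲, ¬ Y ⊆ ⋃₀ 𝒲') ∧
        𝒲.Finite ∧ 𝒲.ncard = n + 1} with hT
      set S : {A : Set X // A ∈ 𝒜 ∧ y ∈ A} → Type _ := fun A =>
        {𝒱 : Set (Set X) // 𝒱 ⊆ 𝒜 ∧ (Y \ A.1) ⊆ ⋃₀ 𝒱 ∧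
          (∀ 𝒲' ⊂ 𝒱, ¬ (Y \ A.1) ⊆ ⋃₀ 𝒲') ∧ 𝒱.Finite ∧ 𝒱.ncard = n} with hS
      have hmem : ∀ 𝒲 : T, ∃ A, A ∈ 𝒲.1 ∧ y ∈ A := by
        rintro ⟨𝒲, h𝒜, hcov, hmin, hfin, hcard⟩
        exact Set.mem_sUnion.mp (hcov hy)
      have hstep : ∀ (𝒲 : T) (A : Set X), A ∈ 𝒲.1 → y ∈ A →
          (𝒲.1 \ {A}) ⊆ 𝒜 ∧ (Y \ A) ⊆ ⋃₀ (𝒲.1 \ {A}) ∧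
          (∀ 𝒲' ⊂ 𝒲.1 \ {A}, ¬ (Y \ A) ⊆ ⋃₀ 𝒲') ∧ (𝒲.1 \ {A}).Finite ∧
          (𝒲.1 \ {A}).ncard = n := by
        rintro ⟨𝒲, h𝒜, hcov, hmin, hfin, hcard⟩ A hA hyA
        refine ⟨(Set.diff_subset).trans h𝒜, ?_, ?_, hfin.diff, ?_⟩
        · rintro z ⟨hzY, hzA⟩
          obtain ⟨B, hB, hzB⟩ := Set.mem_sUnion.mp (hcov hzY)
          exact Set.mem_sUnion.mpr ⟨B, ⟨hB, fun hBA => hzA (hBA ▸ hzB)⟩, hzB⟩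
        · rintro 𝒲' h𝒲' hcov'
          have hsub : insert A 𝒲' ⊂ 𝒲 := by
            constructor
            · rintro B hB
              rcases hB with rfl | hB
              · exact hA
              · exact (h𝒲'.1 hB).1
            · intro habs
              obtain ⟨B, hB𝒱, hB𝒲'⟩ := Set.exists_of_ssubset h𝒲'
              have : B ∈ insert A 𝒲' := habs hB𝒱.1
              rcases this with rfl | hB
              · exact hB𝒱.2 rfl
              · exact hB𝒲' hB
          refine hmin _ hsub ?_
          intro z hzY
          by_cases hzA : z ∈ A
          · exact Set.mem_sUnion.mpr ⟨A, Set.mem_insert _ _, hzA⟩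
          · obtain ⟨B, hB, hzB⟩ := Set.mem_sUnion.mp (hcov' ⟨hzY, hzA⟩)
            exact Set.mem_sUnion.mpr ⟨B, Set.mem_insert_of_mem _ hB, hzB⟩
        · rw [Set.ncard_diff_singleton_of_mem hA, hcard]
          simp
      classical
      let f : T → Σ A : {A : Set X // A ∈ 𝒜 ∧ y ∈ A}, S A := fun 𝒲 =>
        ⟨⟨(hmem 𝒲).choose, 𝒲.2.1 (hmem 𝒲).choose_spec.1, (hmem 𝒲).choose_spec.2⟩,
          ⟨𝒲.1 \ {(hmem 𝒲).choose},
            hstep 𝒲 _ (hmem 𝒲).choose_spec.1 (hmem 𝒲).choose_spec.2⟩⟩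
      have hfinj : Function.Injective f := by
        intro 𝒲₁ 𝒲₂ heq
        have hA : (hmem 𝒲₁).choose = (hmem 𝒲₂).choose :=
          congrArg (fun p => (p.1 : Set X)) heq
        have h𝒱 : 𝒲₁.1 \ {(hmem 𝒲₁).choose} = 𝒲₂.1 \ {(hmem 𝒲₂).choose} :=
          congrArg (fun p => (p.2.1 : Set (Set X))) heq
        apply Subtype.ext
        have e₁ : 𝒲₁.1 = insert (hmem 𝒲₁).choose (𝒲₁.1 \ {(hmem 𝒲₁).choose}) := by
          rw [Set.insert_diff_singleton, Set.insert_eq_self.mpr (hmem 𝒲₁).choose_spec.1]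
        have e₂ : 𝒲₂.1 = insert (hmem 𝒲₂).choose (𝒲₂.1 \ {(hmem 𝒲₂).choose}) := by
          rw [Set.insert_diff_singleton, Set.insert_eq_self.mpr (hmem 𝒲₂).choose_spec.1]
        rw [e₁, e₂, h𝒱, hA]
      calc #T ≤ #(Σ A : {A : Set X // A ∈ 𝒜 ∧ y ∈ A}, S A) := Cardinal.mk_le_of_injective hfinj
        _ = Cardinal.sum (fun A => #(S A)) := Cardinal.mk_sigma _
        _ ≤ Cardinal.sum (fun _ : {A : Set X // A ∈ 𝒜 ∧ y ∈ A} => κ) :=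
            Cardinal.sum_le_sum _ _ (fun A => ih (Y \ A.1))
        _ = #{A : Set X // A ∈ 𝒜 ∧ y ∈ A} * κ := Cardinal.sum_const' _ _
        _ ≤ κ * κ := mul_le_mul' (hord y) le_rfl
        _ = κ := Cardinal.mul_eq_self hκ

/-- **Miščenko's lemma.** If every point of `X` lies in at most `κ` members of `𝒜`
(`κ` infinite), then the number of finite minimal covers of `X` by elements of `𝒜`
is at most `κ`. -/
theorem miscenko {X : Type*} (κ : Cardinal) (hκ : ℵ₀ ≤ κ)
    (𝒜 : Set (Set X)) (hord : ∀ x : X, #{A : Set X // A ∈ 𝒜 ∧ x ∈ A} ≤ κ) :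
    #{𝒲 : Set (Set X) // 𝒲 ⊆ 𝒜 ∧ 𝒲.Finite ∧ ⋃₀ 𝒲 = Set.univ ∧
        ∀ 𝒲' ⊂ 𝒲, ⋃₀ 𝒲' ≠ Set.univ} ≤ κ := by
  classical
  let S : ℕ → Type _ := fun n =>
    {𝒲 : Set (Set X) // 𝒲 ⊆ 𝒜 ∧ (univ : Set X) ⊆ ⋃₀ 𝒲 ∧
      (∀ 𝒲' ⊂ 𝒲, ¬ (univ : Set X) ⊆ ⋃₀ 𝒲') ∧ 𝒲.Finite ∧ 𝒲.ncard = n}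
  let f : {𝒲 : Set (Set X) // 𝒲 ⊆ 𝒜 ∧ 𝒲.Finite ∧ ⋃₀ 𝒲 = Set.univ ∧
      ∀ 𝒲' ⊂ 𝒲, ⋃₀ 𝒲' ≠ Set.univ} → Σ n : ℕ, S n := fun 𝒲 =>
    ⟨𝒲.1.ncard, ⟨𝒲.1, 𝒲.2.1, 𝒲.2.2.2.1.ge, fun 𝒲' h𝒲' hc =>
      𝒲.2.2.2.2 𝒲' h𝒲' (univ_subset_iff.mp hc), 𝒲.2.2.1, rfl⟩⟩
  have hfinj : Function.Injective f := by
    intro 𝒲₁ 𝒲₂ heq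
    exact Subtype.ext (congrArg (fun p => (p.2.1 : Set (Set X))) heq)
  calc #{𝒲 : Set (Set X) // 𝒲 ⊆ 𝒜 ∧ 𝒲.Finite ∧ ⋃₀ 𝒲 = Set.univ ∧
        ∀ 𝒲' ⊂ 𝒲, ⋃₀ 𝒲' ≠ Set.univ}
      ≤ #(Σ n : ℕ, S n) := Cardinal.mk_le_of_injective hfinj
    _ = Cardinal.sum (fun n => #(S n)) := Cardinal.mk_sigma _
    _ ≤ Cardinal.sum (fun _ : ℕ => κ) :=
        Cardinal.sum_le_sum _ _ (fun n => miscenko_key κ hκ 𝒜 hord n univ)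
    _ = ℵ₀ * κ := by simp [Cardinal.sum_const, Cardinal.mk_nat]
    _ ≤ κ * κ := mul_le_mul' hκ le_rfl
    _ = κ := Cardinal.mul_eq_self hκ
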